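/- Let (x, y) be a T-periodic solution of x' = a·x − b·x·y, y' = −c·y + d·x² − f(t) with x(t) > 0 for all t. Then for all t: (a/b)·(1 − cT) − ‖f⁺‖₁ ≤ y(t) ≤ (a/b)·(1 + cT) + ‖f⁻‖₁, where f⁺ = max(f, 0), f⁻ = max(−f, 0), and ‖g‖₁ = ∫₀ᵀ |g(t)| dt. -/

import Mathlib

open intervalIntegral MeasureTheory

set_option maxHeartbeats 1000000

theorem stmt7 (a b c d T : ℝ) (ha : 0 < a) (hb : 0 < b) (hc : 0 < c) (hd : 0 < d)
    (hT : 0 < T) (f : ℝ → ℝ) (hf : Continuous f) (hfper : Function.Periodic f T)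
    (hfmean : ∫ t in (0 : ℝ)..T, f t = 0)
    (x y : ℝ → ℝ)
    (hx : ∀ t, HasDerivAt x (a * x t - b * x t * y t) t)
    (hy : ∀ t, HasDerivAt y (-c * y t + d * (x t) ^ 2 - f t) t)
    (hxper : Function.Periodic x T) (hyper : Function.Periodic y T)
    (hxpos : ∀ t, 0 < x t) :
    ∀ t,
      (a / b) * (1 - c * T) - (∫ s in (0 : ℝ)..T, max (f s) 0) ≤ y t ∧
      y t ≤ (a / b) * (1 + c * T) + (∫ s in (0 : ℝ)..T, max (-f s) 0) := by
  have cx : Continuous x := by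
    have h : Differentiable ℝ x := fun t => (hx t).differentiableAt
    exact h.continuous
  have cy : Continuous y := by
    have h : Differentiable ℝ y := fun t => (hy t).differentiableAt
    exact h.continuous
  have cX : Continuous (fun s => d * x s ^ 2) := by fun_prop
  have cg : Continuous (fun s => -c * y s + d * x s ^ 2 - f s) := by fun_prop
  have cfp : Continuous (fun s => max (f s) 0) := hf.max continuous_const
  have cfm : Continuous (fun s => max (-f s) 0) := hf.neg.max continuous_const
  -- ∫₀ᵀ y = aT/b
  have hLder : ∀ s, HasDerivAt (fun u => Real.log (x u)) (a - b * y s) s := by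
    intro s
    have h := (hx s).log (hxpos s).ne'
    convert h using 1
    have hxne : x s ≠ 0 := (hxpos s).ne'
    field_simp
  have hyint : ∫ s in (0:ℝ)..T, y s = a * T / b := by
    have hftc : ∫ s in (0:ℝ)..T, (a - b * y s) = Real.log (x T) - Real.log (x 0) :=
      intervalIntegral.integral_eq_sub_of_hasDerivAt (fun s _ => hLder s)
        ((continuous_const.sub (continuous_const.mul cy)).intervalIntegrable _ _)
    have hxT : x T = x 0 := by simpa using hxper 0
    rw [hxT, sub_self] at hftc
    rw [intervalIntegral.integral_sub (f := fun _ => a) (g := fun s => b * y s)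
      ((continuous_const (y := a)).intervalIntegrable _ _)
      ((continuous_const.mul cy).intervalIntegrable _ _),
      intervalIntegral.integral_const, intervalIntegral.integral_const_mul] at hftc
    simp only [sub_zero, smul_eq_mul] at hftc
    have hy0 : ∫ s in (0:ℝ)..T, y s = a * T / b := by
      field_simp
      nlinarith [hftc]
    exact hy0
  -- ∫₀ᵀ d x² = c (aT/b)
  have hXint : ∫ s in (0:ℝ)..T, d * x s ^ 2 = c * (a * T / b) := by
    have hftc : ∫ s in (0:ℝ)..T, (-c * y s + d * x s ^ 2 - f s) = y T - y 0 :=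
      intervalIntegral.integral_eq_sub_of_hasDerivAt (fun s _ => hy s)
        (cg.intervalIntegrable _ _)
    have hyT : y T = y 0 := by simpa using hyper 0
    rw [hyT, sub_self] at hftc
    rw [intervalIntegral.integral_sub (f := fun s => -c * y s + d * x s ^ 2) (g := f)
      (((continuous_const.mul cy).add cX).intervalIntegrable _ _)
      (hf.intervalIntegrable _ _),
      intervalIntegral.integral_add (f := fun s => -c * y s) (g := fun s => d * x s ^ 2)
      ((continuous_const.mul cy).intervalIntegrable _ _)
      (cX.intervalIntegrable _ _), intervalIntegral.integral_const_mul, hyint, hfmean] at hftc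
    linarith
  intro t
  have htT : t - T ≤ t := by linarith
  -- shifted integrals
  have shift : ∀ g : ℝ → ℝ, Function.Periodic g T →
      ∫ s in (t-T)..t, g s = ∫ s in (0:ℝ)..T, g s := by
    intro g hg
    have := hg.intervalIntegral_add_eq (t - T) 0
    simpa using this
  have hyshift : ∫ s in (t-T)..t, y s = a * T / b := by rw [shift y hyper, hyint]
  have hXshift : ∫ s in (t-T)..t, d * x s ^ 2 = c * (a * T / b) := by
    rw [shift _ (fun s => by simp [hxper s]), hXint]
  have hfpshift : ∫ s in (t-T)..t, max (f s) 0 = ∫ s in (0:ℝ)..T, max (f s) 0 :=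
    shift _ (fun s => by simp [hfper s])
  have hfmshift : ∫ s in (t-T)..t, max (-f s) 0 = ∫ s in (0:ℝ)..T, max (-f s) 0 :=
    shift _ (fun s => by simp [hfper s])
  -- nonnegativity of f⁺, f⁻ integrals
  have hfppos : 0 ≤ ∫ s in (0:ℝ)..T, max (f s) 0 :=
    intervalIntegral.integral_nonneg hT.le (fun s _ => le_max_right _ _)
  have hfmpos : 0 ≤ ∫ s in (0:ℝ)..T, max (-f s) 0 :=
    intervalIntegral.integral_nonneg hT.le (fun s _ => le_max_right _ _)
  have hab : 0 < a / b := div_pos ha hb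
  -- exists a point in [t-T,t] with value a/b
  have h1 : ∃ s ∈ Set.Icc (t-T) t, y s ≤ a / b := by
    by_contra hcon
    push_neg at hcon
    have hpos : 0 < ∫ s in (t-T)..t, (y s - a / b) := by
      apply intervalIntegral_pos_of_pos_on ((cy.sub continuous_const).intervalIntegrable _ _)
        (fun s hs => sub_pos.2 (hcon s ⟨hs.1.le, hs.2.le⟩)) (by linarith)
    have hz : ∫ s in (t-T)..t, (y s - a / b) = 0 := by
      rw [intervalIntegral.integral_sub (cy.intervalIntegrable _ _)
        ((continuous_const (y := a/b)).intervalIntegrable _ _),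
        hyshift, intervalIntegral.integral_const]
      field_simp
      ring_nf
      rw [mul_inv_cancel_right₀ hb.ne', sub_self]
    linarith
  have h2 : ∃ s ∈ Set.Icc (t-T) t, a / b ≤ y s := by
    by_contra hcon
    push_neg at hcon
    have hpos : 0 < ∫ s in (t-T)..t, (a / b - y s) := by
      apply intervalIntegral_pos_of_pos_on ((continuous_const.sub cy).intervalIntegrable _ _)
        (fun s hs => sub_pos.2 (hcon s ⟨hs.1.le, hs.2.le⟩)) (by linarith)
    have hz : ∫ s in (t-T)..t, (a / b - y s) = 0 := by
      rw [intervalIntegral.integral_sub ((continuous_const (y := a/b)).intervalIntegrable _ _)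
        (cy.intervalIntegrable _ _), hyshift, intervalIntegral.integral_const]
      field_simp
      ring_nf
      rw [mul_comm b a, mul_inv_cancel_right₀ hb.ne', sub_self]
    linarith
  obtain ⟨u, hu, hyu⟩ := h1
  obtain ⟨v, hv, hyv⟩ := h2
  have hsubIcc : Set.uIcc u v ⊆ Set.Icc (t-T) t := by
    rw [← Set.uIcc_of_le htT]
    exact Set.uIcc_subset_uIcc (by rwa [Set.uIcc_of_le htT]) (by rwa [Set.uIcc_of_le htT])
  obtain ⟨t₀, ht₀mem, ht₀⟩ := intermediate_value_uIcc (cy.continuousOn)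
    (Set.mem_uIcc.2 (Or.inl ⟨hyu, hyv⟩))
  -- last time before t with y = a/b
  set S : Set ℝ := Set.Icc (t-T) t ∩ {s | y s = a / b} with hS
  have hSne : S.Nonempty := ⟨t₀, hsubIcc ht₀mem, ht₀⟩
  have hSclosed : IsClosed S := isClosed_Icc.inter (isClosed_eq cy continuous_const)
  have hSbdd : BddAbove S := ⟨t, fun s hs => hs.1.2⟩
  set t₁ := sSup S with ht₁
  have ht₁S : t₁ ∈ S := hSclosed.csSup_mem hSne hSbdd
  have hlet₁ : t - T ≤ t₁ := ht₁S.1.1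
  have ht₁le : t₁ ≤ t := ht₁S.1.2
  have hyt₁ : y t₁ = a / b := ht₁S.2
  -- FTC on [t₁, t]
  have hftc3 : ∫ s in t₁..t, (-c * y s + d * x s ^ 2 - f s) = y t - y t₁ :=
    intervalIntegral.integral_eq_sub_of_hasDerivAt (fun s _ => hy s)
      (cg.intervalIntegrable _ _)
  have hyteq : y t = a / b + ∫ s in t₁..t, (-c * y s + d * x s ^ 2 - f s) := by
    rw [hftc3, hyt₁]; ring
  -- "no crossing" claims
  have key : ∀ w : ℝ, (y t - a/b) * (y w - a/b) < 0 → w ∈ Set.Icc t₁ t → False := by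
    intro w hw hwmem
    have hwne : y w ≠ a / b := by
      intro h; rw [h] at hw; simp at hw
    have hwt : w ≠ t := by
      intro h; rw [h] at hw
      nlinarith [sq_nonneg (y t - a/b)]
    have hmem : a / b ∈ Set.uIcc (y w) (y t) := by
      rcases lt_or_ge (y w) (a/b) with h' | h'
      · have : a / b < y t := by nlinarith
        exact Set.mem_uIcc.2 (Or.inl ⟨h'.le, this.le⟩)
      · have h'' : a / b < y w := lt_of_le_of_ne h' (Ne.symm hwne)
        have h4 : 0 < y w - a/b := sub_pos.2 h''
        have : y t < a / b := by nlinarith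
        exact Set.mem_uIcc.2 (Or.inr ⟨this.le, h''.le⟩)
    obtain ⟨r, hrmem, hr⟩ := intermediate_value_uIcc cy.continuousOn hmem
    rw [Set.uIcc_of_le hwmem.2] at hrmem
    have hwgt : t₁ < w := lt_of_le_of_ne hwmem.1 (by
      intro h; rw [← h] at hwne; exact hwne hyt₁)
    have hrS : r ∈ S := ⟨⟨by linarith [hrmem.1], hrmem.2⟩, hr⟩
    have : r ≤ t₁ := le_csSup hSbdd hrS
    linarith [hrmem.1]
  constructor
  · -- lower bound
    rcases le_or_gt (a/b) (y t) with h | h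
    · have h5 : 0 < a / b * (c * T) := by positivity
      have heq : a / b * (1 - c * T) = a / b - a / b * (c * T) := by ring
      linarith
    · have claim : ∀ s ∈ Set.Icc t₁ t, y s ≤ a / b := by
        intro s hs
        by_contra hlt
        push_neg at hlt
        exact key s (mul_neg_of_neg_of_pos (by linarith) (by linarith)) hs
      have hb1 : ∫ s in t₁..t, (-(c * (a/b)) - max (f s) 0) ≤
          ∫ s in t₁..t, (-c * y s + d * x s ^ 2 - f s) := by
        apply intervalIntegral.integral_mono_on ht₁le
          ((continuous_const.sub cfp).intervalIntegrable _ _) (cg.intervalIntegrable _ _)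
        intro s hs
        have h1 : c * y s ≤ c * (a/b) := mul_le_mul_of_nonneg_left (claim s hs) hc.le
        have h2 : f s ≤ max (f s) 0 := le_max_left _ _
        have h3 : 0 ≤ d * x s ^ 2 := by positivity
        show -(c * (a/b)) - max (f s) 0 ≤ -c * y s + d * x s ^ 2 - f s
        linarith
      have hlhs : ∫ s in t₁..t, (-(c * (a/b)) - max (f s) 0)
          = (t - t₁) * (-(c * (a/b))) - ∫ s in t₁..t, max (f s) 0 := by
        rw [intervalIntegral.integral_sub ((continuous_const (y := -(c*(a/b)))).intervalIntegrable _ _)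
          (cfp.intervalIntegrable _ _), intervalIntegral.integral_const, smul_eq_mul]
      have hfp_le : ∫ s in t₁..t, max (f s) 0 ≤ ∫ s in (0:ℝ)..T, max (f s) 0 := by
        rw [← hfpshift]
        apply intervalIntegral.integral_mono_interval hlet₁ ht₁le le_rfl
          (ae_of_all _ (fun s => le_max_right _ _)) (cfp.intervalIntegrable _ _)
      have htt₁ : t - t₁ ≤ T := by linarith
      have hconst : T * (-(c * (a/b))) ≤ (t - t₁) * (-(c * (a/b))) := by
        have h0 : 0 ≤ c * (a/b) := by positivity
        have h5 := mul_le_mul_of_nonneg_right htt₁ h0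
        linarith [h5]
      rw [hyteq]
      have hI := hb1
      rw [hlhs] at hI
      have heq2 : a / b * (1 - c * T) = a / b + T * (-(c * (a/b))) := by ring
      linarith
  · -- upper bound
    rcases le_or_gt (y t) (a/b) with h | h
    · have h5 : 0 < a / b * (c * T) := by positivity
      have heq : a / b * (1 + c * T) = a / b + a / b * (c * T) := by ring
      linarith
    · have claim : ∀ s ∈ Set.Icc t₁ t, a / b ≤ y s := by
        intro s hs
        by_contra hlt
        push_neg at hlt
        exact key s (mul_neg_of_pos_of_neg (by linarith) (by linarith)) hs
      have hb1 : ∫ s in t₁..t, (-c * y s + d * x s ^ 2 - f s) ≤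
          ∫ s in t₁..t, (d * x s ^ 2 + max (-f s) 0) := by
        apply intervalIntegral.integral_mono_on ht₁le (cg.intervalIntegrable _ _)
          ((cX.add cfm).intervalIntegrable _ _)
        intro s hs
        have h1 : 0 < y s := lt_of_lt_of_le hab (claim s hs)
        have h2 : -f s ≤ max (-f s) 0 := le_max_left _ _
        have h3 : 0 ≤ c * y s := by positivity
        show -c * y s + d * x s ^ 2 - f s ≤ d * x s ^ 2 + max (-f s) 0
        linarith
      have hrhs : ∫ s in t₁..t, (d * x s ^ 2 + max (-f s) 0)
          = (∫ s in t₁..t, d * x s ^ 2) + ∫ s in t₁..t, max (-f s) 0 :=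
        intervalIntegral.integral_add (cX.intervalIntegrable _ _) (cfm.intervalIntegrable _ _)
      have hX_le : ∫ s in t₁..t, d * x s ^ 2 ≤ c * (a * T / b) := by
        rw [← hXshift]
        apply intervalIntegral.integral_mono_interval hlet₁ ht₁le le_rfl
          (ae_of_all _ (fun s => by positivity)) (cX.intervalIntegrable _ _)
      have hfm_le : ∫ s in t₁..t, max (-f s) 0 ≤ ∫ s in (0:ℝ)..T, max (-f s) 0 := by
        rw [← hfmshift]
        apply intervalIntegral.integral_mono_interval hlet₁ ht₁le le_rfl
          (ae_of_all _ (fun s => le_max_right _ _)) (cfm.intervalIntegrable _ _)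
      rw [hyteq]
      have hI := hb1
      rw [hrhs] at hI
      have heq : a / b + c * (a * T / b) = a / b * (1 + c * T) := by ring
      linarith
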